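/- In ℝ² with the Euclidean norm, let Ω₁ = {(u,v) : u ≤ 0 or v ≥ u²} and Ω₂ = {(u,v) : u ≤ 0 or v ≤ −u²}, and x̄ = (0,0). Then {Ω₁, Ω₂} is semiregular at x̄; in fact, for every ρ > 0, the point x_ρ = (−ρ, 0) satisfies B_ρ(x_ρ) ⊆ Ω₁ ∩ Ω₂, and hence x_ρ ∈ (Ω₁ − x₁) ∩ (Ω₂ − x₂) ∩ B_ρ(x̄) for all x₁, x₂ ∈ ρ𝔹. -/

import Mathlib

open Metric

local notation "E" => EuclideanSpace ℝ (Fin 2)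

/-- The vector `(a, b)` in `E`. -/
def vec (a b : ℝ) : E := WithLp.toLp 2 ![a, b]

/-- `[1]`-semiregularity of the pair `{Ω₁, Ω₂}` at `0`. -/
def SemiReg2 (Ω₁ Ω₂ : Set E) : Prop :=
  ∃ α > (0:ℝ), ∃ δ > (0:ℝ), ∀ ρ ∈ Set.Ioo (0:ℝ) δ, ∀ x₁ x₂ : E,
    ‖x₁‖ ≤ α * ρ → ‖x₂‖ ≤ α * ρ →
    ∃ y ∈ Metric.closedBall (0:E) ρ, y + x₁ ∈ Ω₁ ∧ y + x₂ ∈ Ω₂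

lemma coord_abs_le (p : E) (i : Fin 2) : |p i| ≤ ‖p‖ := by
  rw [EuclideanSpace.norm_eq]
  have h : |p i| = Real.sqrt (‖p i‖ ^ 2) := by
    rw [Real.sqrt_sq_eq_abs]; simp [abs_abs]
  rw [h]
  apply Real.sqrt_le_sqrt
  exact Finset.single_le_sum (f := fun j => ‖p j‖ ^ 2) (fun j _ => by positivity)
    (Finset.mem_univ i)

lemma vec0 (a b : ℝ) : vec a b 0 = a := rfl

lemma norm_vec_neg (ρ : ℝ) (hρ : 0 ≤ ρ) : ‖vec (-ρ) 0‖ = ρ := by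
  rw [EuclideanSpace.norm_eq]
  have h : ∑ i : Fin 2, ‖vec (-ρ) 0 i‖ ^ 2 = ρ ^ 2 := by
    simp [Fin.sum_univ_succ, vec]
  rw [h, Real.sqrt_sq hρ]

lemma shift_nonpos (ρ : ℝ) (x : E) (hx : ‖x‖ ≤ ρ) :
    (vec (-ρ) 0 + x) 0 ≤ 0 := by
  have h0 : (vec (-ρ) 0 + x) 0 = -ρ + x 0 := by
    simp [vec0]
  have h1 := (abs_le.mp (le_trans (coord_abs_le x 0) hx)).2
  rw [h0]; linarith

lemma ball_nonpos (ρ : ℝ) (p : E) (hp : p ∈ Metric.closedBall (vec (-ρ) 0) ρ) :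
    p 0 ≤ 0 := by
  rw [Metric.mem_closedBall, dist_eq_norm] at hp
  have h1 := le_trans (coord_abs_le (p - vec (-ρ) 0) 0) hp
  have h0 : (p - vec (-ρ) 0) 0 = p 0 + ρ := by
    have he : (p - vec (-ρ) 0) 0 = p 0 - vec (-ρ) 0 0 := rfl
    rw [he, vec0]; ring
  rw [h0] at h1
  have := (abs_le.mp h1).2
  linarith

theorem semiReg_example3 :
    (∀ ρ > (0:ℝ), Metric.closedBall (vec (-ρ) 0) ρ ⊆
      {p : E | p 0 ≤ 0 ∨ (p 0) ^ 2 ≤ p 1} ∩ {p : E | p 0 ≤ 0 ∨ p 1 ≤ -(p 0) ^ 2}) ∧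
    (∀ ρ > (0:ℝ), ∀ x₁ x₂ : E, ‖x₁‖ ≤ ρ → ‖x₂‖ ≤ ρ →
      vec (-ρ) (0) + x₁ ∈ {p : E | p 0 ≤ 0 ∨ (p 0) ^ 2 ≤ p 1} ∧
      vec (-ρ) (0) + x₂ ∈ {p : E | p 0 ≤ 0 ∨ p 1 ≤ -(p 0) ^ 2} ∧
      vec (-ρ) (0) ∈ Metric.closedBall (0:E) ρ) ∧
    SemiReg2 {p : E | p 0 ≤ 0 ∨ (p 0) ^ 2 ≤ p 1} {p : E | p 0 ≤ 0 ∨ p 1 ≤ -(p 0) ^ 2} := by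
  have hcenter : ∀ ρ > (0:ℝ), vec (-ρ) 0 ∈ Metric.closedBall (0:E) ρ := by
    intro ρ hρ
    rw [Metric.mem_closedBall, dist_zero_right, norm_vec_neg ρ hρ.le]
  have hmain : ∀ ρ > (0:ℝ), ∀ x₁ x₂ : E, ‖x₁‖ ≤ ρ → ‖x₂‖ ≤ ρ →
      vec (-ρ) (0) + x₁ ∈ {p : E | p 0 ≤ 0 ∨ (p 0) ^ 2 ≤ p 1} ∧
      vec (-ρ) (0) + x₂ ∈ {p : E | p 0 ≤ 0 ∨ p 1 ≤ -(p 0) ^ 2} ∧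
      vec (-ρ) (0) ∈ Metric.closedBall (0:E) ρ := by
    intro ρ hρ x₁ x₂ h₁ h₂
    exact ⟨Or.inl (shift_nonpos ρ x₁ h₁), Or.inl (shift_nonpos ρ x₂ h₂), hcenter ρ hρ⟩
  refine ⟨?_, hmain, ?_⟩
  · intro ρ hρ p hp
    exact ⟨Or.inl (ball_nonpos ρ p hp), Or.inl (ball_nonpos ρ p hp)⟩
  · refine ⟨1, one_pos, 1, one_pos, ?_⟩
    intro ρ hρ x₁ x₂ h₁ h₂
    rw [one_mul] at h₁ h₂
    obtain ⟨a, b, c⟩ := hmain ρ hρ.1 x₁ x₂ h₁ h₂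
    exact ⟨vec (-ρ) 0, c, a, b⟩
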